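/- For the d-dimensional isotropic state ρ(p,d) = p·φ⁺_d + (1−p)·Id/d², where φ⁺_d is the projection onto the maximally entangled state (1/√d)Σ|ii⟩, and for p ≥ 1/(d+1), the best separable approximation satisfies BSA(ρ(p,d)) = ((d+1)/d)(1−p). -/

import Mathlib

open Matrix BigOperators Kronecker
open scoped ComplexOrder

noncomputable section

/-- A density matrix: positive semidefinite with trace one. -/
def IsState {ι : Type*} [Fintype ι] [DecidableEq ι]
    (ρ : Matrix ι ι ℂ) : Prop :=
  ρ.PosSemidef ∧ ρ.trace = 1

/-- A bipartite state on `ℂ^n ⊗ ℂ^m` is separable if it is a convex combination of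
product states. -/
def IsSepState {n m : ℕ} (ρ : Matrix (Fin n × Fin m) (Fin n × Fin m) ℂ) : Prop :=
  ∃ (N : ℕ) (p : Fin N → ℝ) (σ : Fin N → Matrix (Fin n) (Fin n) ℂ)
    (τ : Fin N → Matrix (Fin m) (Fin m) ℂ),
    (∀ i, 0 ≤ p i) ∧ (∑ i, p i = 1) ∧
    (∀ i, IsState (σ i)) ∧ (∀ i, IsState (τ i)) ∧
    ρ = ∑ i, (p i : ℂ) • (σ i ⊗ₖ τ i)

/-- The best separable approximation of `ρ`: the maximal weight of a separable state
in a convex decomposition of `ρ`. -/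
def BSA {n m : ℕ} (ρ : Matrix (Fin n × Fin m) (Fin n × Fin m) ℂ) : ℝ :=
  sSup {l : ℝ | l ∈ Set.Icc (0 : ℝ) 1 ∧ ∃ σ τ, IsState σ ∧ IsSepState σ ∧ IsState τ ∧
    ρ = (l : ℂ) • σ + ((1 - l : ℝ) : ℂ) • τ}

/-- The projection onto the `d`-dimensional maximally entangled state
`(1/√d) ∑ᵢ |ii⟩`. -/
def maxEnt (d : ℕ) : Matrix (Fin d × Fin d) (Fin d × Fin d) ℂ :=
  Matrix.of fun p q => if p.1 = p.2 ∧ q.1 = q.2 then (1 / (d : ℂ)) else 0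

/-- The `d`-dimensional isotropic state with visibility `p`. -/
def isotropic (d : ℕ) (p : ℝ) : Matrix (Fin d × Fin d) (Fin d × Fin d) ℂ :=
  (p : ℂ) • maxEnt d + ((1 - p : ℝ) : ℂ) • (((d : ℂ) ^ 2)⁻¹ • (1 : Matrix _ _ ℂ))


variable {n : Type*} [Fintype n] [DecidableEq n]

lemma posSemidef_exists_conjTranspose_mul_self' {n : Type*} [Fintype n] [DecidableEq n]
    {A : Matrix n n ℂ} (hA : A.PosSemidef) : ∃ B : Matrix n n ℂ, A = Bᴴ * B := by
  open scoped MatrixOrder Matrix.Norms.L2Operator in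
  letI := Matrix.instCStarAlgebra (n := n)
  obtain ⟨B, hB⟩ := CStarAlgebra.nonneg_iff_eq_star_mul_self.mp hA.nonneg
  exact ⟨B, hB⟩

lemma psd_trace_nonneg {A : Matrix n n ℂ} (hA : A.PosSemidef) : 0 ≤ A.trace := by
  rw [Matrix.trace]
  apply Finset.sum_nonneg
  intro i _
  have := hA.dotProduct_mulVec_nonneg (Pi.single i 1)
  simpa [dotProduct, Matrix.mulVec, Pi.single_apply, Finset.sum_ite_eq,
    Finset.sum_ite_eq'] using this

lemma trace_mul_nonneg {A B : Matrix n n ℂ} (hA : A.PosSemidef) (hB : B.PosSemidef) :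
    0 ≤ (A * B).trace := by
  obtain ⟨C, rfl⟩ := posSemidef_exists_conjTranspose_mul_self' hB
  rw [← Matrix.mul_assoc, Matrix.trace_mul_comm, ← Matrix.mul_assoc]
  exact psd_trace_nonneg (hA.mul_mul_conjTranspose_same C)

lemma psd_of_proj {A : Matrix n n ℂ} (h1 : Aᴴ = A) (h2 : A * A = A) : A.PosSemidef := by
  have : A = Aᴴ * A := by rw [h1, h2]
  rw [this]
  exact Matrix.posSemidef_conjTranspose_mul_self A

lemma psd_smul {A : Matrix n n ℂ} (hA : A.PosSemidef) {c : ℝ} (hc : 0 ≤ c) :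
    ((c : ℂ) • A).PosSemidef := by
  refine Matrix.PosSemidef.of_dotProduct_mulVec_nonneg ?_ ?_
  · rw [Matrix.IsHermitian, Matrix.conjTranspose_smul, hA.1.eq]
    norm_num
  · intro x
    rw [Matrix.smul_mulVec, dotProduct_smul, smul_eq_mul]
    exact mul_nonneg (by exact_mod_cast hc) (hA.dotProduct_mulVec_nonneg x)

lemma psd_kronecker {m : Type*} [Fintype m] [DecidableEq m]
    {A : Matrix n n ℂ} {B : Matrix m m ℂ} (hA : A.PosSemidef) (hB : B.PosSemidef) :
    (A ⊗ₖ B).PosSemidef := by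
  obtain ⟨X, rfl⟩ := posSemidef_exists_conjTranspose_mul_self' hA
  obtain ⟨Y, rfl⟩ := posSemidef_exists_conjTranspose_mul_self' hB
  rw [Matrix.mul_kronecker_mul]
  have : (Xᴴ ⊗ₖ Yᴴ) = (X ⊗ₖ Y)ᴴ := by
    ext ⟨a, b⟩ ⟨c, d⟩
    simp [Matrix.conjTranspose_apply, Matrix.kroneckerMap_apply]
  rw [this]
  exact Matrix.posSemidef_conjTranspose_mul_self _

section Part2

def swapM (d : ℕ) : Matrix (Fin d × Fin d) (Fin d × Fin d) ℂ :=
  Matrix.of fun p q => if p.1 = q.2 ∧ p.2 = q.1 then 1 else 0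

variable {d : ℕ}

lemma maxEnt_herm : (maxEnt d)ᴴ = maxEnt d := by
  ext ⟨a, b⟩ ⟨c, e⟩
  simp only [Matrix.conjTranspose_apply, maxEnt, Matrix.of_apply]
  split_ifs with h1 h2 h2 <;> simp_all [and_comm] <;> tauto

lemma maxEnt_idem (hd : (d : ℂ) ≠ 0) : maxEnt d * maxEnt d = maxEnt d := by
  ext ⟨a, b⟩ ⟨c, e⟩
  simp only [Matrix.mul_apply, maxEnt, Matrix.of_apply]
  rw [Fintype.sum_prod_type]
  simp only [Finset.sum_ite_of_false, ite_and]
  by_cases h1 : a = b <;> by_cases h2 : c = e <;>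
    simp [h1, h2, Finset.sum_ite_eq, Finset.mul_sum, Finset.sum_ite_eq']
  · field_simp

lemma maxEnt_trace (hd : (d : ℂ) ≠ 0) : (maxEnt d).trace = 1 := by
  rw [Matrix.trace]
  simp only [Matrix.diag_apply, maxEnt, Matrix.of_apply]
  rw [Fintype.sum_prod_type]
  simp [Finset.sum_ite_eq]
  field_simp

lemma swap_herm : (swapM d)ᴴ = swapM d := by
  ext ⟨a, b⟩ ⟨c, e⟩
  simp only [Matrix.conjTranspose_apply, swapM, Matrix.of_apply]
  split_ifs with h1 h2 h2 <;> simp_all [and_comm]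

lemma swap_sq : swapM d * swapM d = 1 := by
  ext ⟨a, b⟩ ⟨c, e⟩
  simp only [Matrix.mul_apply, swapM, Matrix.of_apply]
  rw [Fintype.sum_prod_type]
  simp only [ite_and]
  rw [Finset.sum_comm]
  simp [Finset.sum_ite_eq, Matrix.one_apply, Prod.ext_iff, and_comm]
  split_ifs <;> simp_all

lemma psd_one_sub_swap : (1 - swapM d).PosSemidef := by
  have key : (1 - swapM d) = (((Real.sqrt 2)⁻¹ : ℂ) • (1 - swapM d))ᴴ *
      (((Real.sqrt 2)⁻¹ : ℂ) • (1 - swapM d)) := by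
    rw [Matrix.conjTranspose_smul, Matrix.smul_mul, Matrix.mul_smul, smul_smul]
    have h1 : (1 - swapM d)ᴴ = 1 - swapM d := by
      rw [Matrix.conjTranspose_sub, swap_herm, Matrix.conjTranspose_one]
    have h2 : (1 - swapM d) * (1 - swapM d) = (2 : ℂ) • (1 - swapM d) := by
      rw [Matrix.mul_sub, Matrix.sub_mul, Matrix.sub_mul, swap_sq]
      simp only [Matrix.mul_one, Matrix.one_mul, two_smul]
      abel
    rw [h1, h2, smul_smul]
    have h0 : ((Real.sqrt 2 : ℝ) : ℂ) * ((Real.sqrt 2 : ℝ) : ℂ) = 2 := by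
      rw [← Complex.ofReal_mul, Real.mul_self_sqrt (by norm_num : (0:ℝ) ≤ 2)]
      norm_num
    have hsc : (star ((Real.sqrt 2 : ℝ) : ℂ)⁻¹ * ((Real.sqrt 2 : ℝ) : ℂ)⁻¹ * 2) = 1 := by
      have hst : star ((Real.sqrt 2 : ℝ) : ℂ) = ((Real.sqrt 2 : ℝ) : ℂ) := by
        simp [Complex.star_def, Complex.conj_ofReal]
      have hne : ((Real.sqrt 2 : ℝ) : ℂ) ≠ 0 := by
        intro h
        rw [h, mul_zero] at h0
        norm_num at h0
      rw [star_inv₀, hst]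
      field_simp
      rw [sq, h0]
    rw [hsc, one_smul]
  rw [key]
  exact Matrix.posSemidef_conjTranspose_mul_self _

lemma psd_of_proj' {n : Type*} [Fintype n] {A : Matrix n n ℂ}
    (h1 : Aᴴ = A) (h2 : A * A = A) : A.PosSemidef := by
  have : A = Aᴴ * A := by rw [h1, h2]
  rw [this]
  exact Matrix.posSemidef_conjTranspose_mul_self A

lemma psd_one_sub_maxEnt (hd : (d : ℂ) ≠ 0) : (1 - maxEnt d).PosSemidef := by
  apply psd_of_proj'
  · rw [Matrix.conjTranspose_sub, maxEnt_herm, Matrix.conjTranspose_one]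
  · rw [Matrix.mul_sub, Matrix.sub_mul, Matrix.sub_mul, maxEnt_idem hd]
    simp only [Matrix.mul_one, Matrix.one_mul]
    abel

lemma trace_prod_maxEnt (A B : Matrix (Fin d) (Fin d) ℂ) :
    ((A ⊗ₖ B) * maxEnt d).trace = (1 / (d : ℂ)) * ∑ a, ∑ b, A a b * B a b := by
  simp only [Matrix.trace, Matrix.diag, Matrix.mul_apply, maxEnt, Matrix.of_apply,
    Matrix.kroneckerMap_apply]
  simp only [Fintype.sum_prod_type, mul_ite, mul_zero, ite_and,
    Finset.sum_ite_eq, Finset.sum_ite_eq', Finset.mem_univ, if_true, Finset.mul_sum]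
  refine Finset.sum_congr rfl fun a _ => ?_
  rw [Finset.sum_comm]
  simp only [Finset.sum_ite_eq, Finset.mem_univ, if_true]
  exact Finset.sum_congr rfl fun b _ => by ring

lemma trace_prod_swap (A B : Matrix (Fin d) (Fin d) ℂ) :
    ((A ⊗ₖ Bᵀ) * swapM d).trace = ∑ a, ∑ b, A a b * B a b := by
  simp only [Matrix.trace, Matrix.diag, Matrix.mul_apply, swapM, Matrix.of_apply,
    Matrix.kroneckerMap_apply]
  simp only [Fintype.sum_prod_type, mul_ite, mul_one, mul_zero, ite_and,
    Finset.sum_ite_eq, Finset.sum_ite_eq', Finset.mem_univ, if_true, Matrix.transpose_apply,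
    Finset.sum_ite_irrel, Finset.sum_const_zero]

lemma psd_sum {n ι : Type*} [Fintype n] (s : Finset ι) (f : ι → Matrix n n ℂ)
    (h : ∀ i ∈ s, (f i).PosSemidef) : (∑ i ∈ s, f i).PosSemidef := by
  classical
  induction s using Finset.induction_on with
  | empty => simpa using Matrix.PosSemidef.zero
  | insert _ _ hni ih =>
    rw [Finset.sum_insert hni]
    exact (h _ (Finset.mem_insert_self _ _)).add
      (ih fun i hi => h i (Finset.mem_insert_of_mem hi))

lemma trace_re_le_one {n : Type*} [Fintype n] [DecidableEq n]
    {X M : Matrix n n ℂ} (hX : X.PosSemidef) (hXtr : X.trace = 1)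
    (hM : (1 - M).PosSemidef) : ((X * M).trace).re ≤ 1 := by
  have h := trace_mul_nonneg hX hM
  rw [Matrix.mul_sub, Matrix.mul_one, Matrix.trace_sub, hXtr] at h
  have := (Complex.le_def.mp h).1
  simp only [Complex.zero_re, Complex.sub_re, Complex.one_re] at this
  linarith

lemma sep_bound {d : ℕ} (hd : 0 < d) {σ : Matrix (Fin d × Fin d) (Fin d × Fin d) ℂ}
    (hσ : IsSepState σ) : ((σ * maxEnt d).trace).re ≤ 1 / (d : ℝ) := by
  obtain ⟨N, q, A, B, hq0, hq1, hA, hB, rfl⟩ := hσ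
  have hdc : ((d : ℝ) : ℂ) = (d : ℂ) := by push_cast; ring
  set σ' : Matrix (Fin d × Fin d) (Fin d × Fin d) ℂ :=
    ∑ i, (q i : ℂ) • (A i ⊗ₖ (B i)ᵀ) with hσ'
  have key : ((∑ i, (q i : ℂ) • (A i ⊗ₖ B i)) * maxEnt d).trace
      = (((1 / (d : ℝ)) : ℂ)) * (σ' * swapM d).trace := by
    rw [hσ', Finset.sum_mul, Finset.sum_mul, Matrix.trace_sum, Matrix.trace_sum,
      Finset.mul_sum]
    refine Finset.sum_congr rfl fun i _ => ?_
    rw [Matrix.smul_mul, Matrix.smul_mul, Matrix.trace_smul, Matrix.trace_smul,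
      trace_prod_maxEnt, trace_prod_swap, smul_eq_mul, smul_eq_mul]
    push_cast
    ring
  have hσ'psd : σ'.PosSemidef := by
    apply psd_sum
    intro i _
    exact psd_smul (psd_kronecker (hA i).1 ((hB i).1.transpose)) (hq0 i)
  have hσ'tr : σ'.trace = 1 := by
    rw [hσ', Matrix.trace_sum]
    have : ∀ i, ((q i : ℂ) • (A i ⊗ₖ (B i)ᵀ)).trace = (q i : ℂ) := by
      intro i
      rw [Matrix.trace_smul, Matrix.trace_kronecker, Matrix.trace_transpose,
        (hA i).2, (hB i).2]
      simp
    simp only [this]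
    rw [← Complex.ofReal_sum, hq1, Complex.ofReal_one]
  have hb : ((σ' * swapM d).trace).re ≤ 1 :=
    trace_re_le_one hσ'psd hσ'tr psd_one_sub_swap
  rw [key, show (1 / ((d:ℝ):ℂ)) = (((1/(d:ℝ)):ℝ):ℂ) by push_cast; ring,
    Complex.re_ofReal_mul]
  have hd' : (0 : ℝ) < 1 / (d : ℝ) := by positivity
  calc 1 / (d:ℝ) * ((σ' * swapM d).trace).re ≤ 1 / (d:ℝ) * 1 := by
        exact mul_le_mul_of_nonneg_left hb (le_of_lt hd')
    _ = 1 / (d:ℝ) := by ring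

lemma state_bound {n : Type*} [Fintype n] [DecidableEq n] {d : ℕ} (hd : 0 < d)
    {τ : Matrix (Fin d × Fin d) (Fin d × Fin d) ℂ} (hτ : IsState τ) :
    ((τ * maxEnt d).trace).re ≤ 1 :=
  trace_re_le_one hτ.1 hτ.2 (psd_one_sub_maxEnt (by exact_mod_cast hd.ne'))

end Part2
section Part3
open Matrix BigOperators Kronecker
open scoped ComplexOrder

lemma iso_trace (d : ℕ) (hd : 0 < d) (p : ℝ) :
    ((isotropic d p * maxEnt d).trace).re = p + (1 - p) * ((d : ℝ) ^ 2)⁻¹ := by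
  have hdc : ((d : ℂ)) ≠ 0 := by exact_mod_cast hd.ne'
  rw [isotropic, Matrix.add_mul, Matrix.smul_mul, Matrix.smul_mul, Matrix.smul_mul,
    Matrix.one_mul, maxEnt_idem hdc, Matrix.trace_add, Matrix.trace_smul, Matrix.trace_smul,
    Matrix.trace_smul, maxEnt_trace hdc]
  have : (p : ℂ) • (1:ℂ) + ((1 - p : ℝ) : ℂ) • (((d : ℂ) ^ 2)⁻¹ • (1:ℂ))
      = (((p + (1 - p) * ((d : ℝ) ^ 2)⁻¹ : ℝ)) : ℂ) := by
    simp only [smul_eq_mul, mul_one]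
    push_cast
    ring
  rw [this, Complex.ofReal_re]

lemma upper_bound (d : ℕ) (hd : 2 ≤ d) (p : ℝ) (l : ℝ) (hl0 : 0 ≤ l) (hl1 : l ≤ 1)
    (σ τ : Matrix (Fin d × Fin d) (Fin d × Fin d) ℂ)
    (hσs : IsSepState σ) (hτ : IsState τ)
    (hdec : isotropic d p = (l : ℂ) • σ + ((1 - l : ℝ) : ℂ) • τ) :
    l ≤ ((d : ℝ) + 1) / (d : ℝ) * (1 - p) := by
  have hd0 : 0 < d := by omega
  have hdR : (2 : ℝ) ≤ (d : ℝ) := by exact_mod_cast hd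
  have htr : ((isotropic d p * maxEnt d).trace).re
      = l * ((σ * maxEnt d).trace).re + (1 - l) * ((τ * maxEnt d).trace).re := by
    rw [hdec, Matrix.add_mul, Matrix.smul_mul, Matrix.smul_mul, Matrix.trace_add,
      Matrix.trace_smul, Matrix.trace_smul]
    rw [show ((1 - l : ℝ) : ℂ) • (τ * maxEnt d).trace = (((1-l:ℝ)) : ℂ) * (τ * maxEnt d).trace
      from rfl]
    rw [show ((l : ℝ) : ℂ) • (σ * maxEnt d).trace = ((l : ℝ) : ℂ) * (σ * maxEnt d).trace
      from rfl]
    rw [Complex.add_re, Complex.re_ofReal_mul, Complex.re_ofReal_mul]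
  rw [iso_trace d hd0 p] at htr
  have h1 : ((σ * maxEnt d).trace).re ≤ 1 / (d : ℝ) := sep_bound hd0 hσs
  have h2 : ((τ * maxEnt d).trace).re ≤ 1 := state_bound (n := Fin d × Fin d) hd0 hτ
  have hineq : p + (1 - p) * ((d : ℝ) ^ 2)⁻¹ ≤ l * (1 / (d : ℝ)) + (1 - l) := by
    rw [htr]
    have := mul_le_mul_of_nonneg_left h1 hl0
    have := mul_le_mul_of_nonneg_left h2 (by linarith : (0:ℝ) ≤ 1 - l)
    linarith
  have hdpos : (0 : ℝ) < (d : ℝ) := by positivity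
  rw [div_mul_eq_mul_div, le_div_iff₀ hdpos]
  rw [inv_eq_one_div] at hineq
  have h3 : ((d:ℝ)^2) > 0 := by positivity
  have h4 := mul_le_mul_of_nonneg_right hineq (le_of_lt h3)
  have hdne : (d:ℝ) ≠ 0 := hdpos.ne'
  have h5 : p * (d:ℝ)^2 + (1-p) ≤ l * (d:ℝ) + (1-l) * (d:ℝ)^2 := by
    have h := hineq
    rw [div_eq_mul_inv, div_eq_mul_inv] at h
    have e1 : l * ((1:ℝ) * ((d:ℝ))⁻¹) * (d:ℝ)^2 = l * (d:ℝ) := by field_simp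
    have e2 : (1-p) * ((1:ℝ) * ((d:ℝ)^2)⁻¹) * (d:ℝ)^2 = (1-p) := by field_simp
    nlinarith [mul_le_mul_of_nonneg_right h (le_of_lt h3), e1, e2]
  have h6 : ((d:ℝ)-1) * (l*(d:ℝ)) ≤ ((d:ℝ)-1)*(((d:ℝ)+1)*(1-p)) := by nlinarith [h5]
  have h7 : (0:ℝ) < (d:ℝ)-1 := by linarith
  exact le_of_mul_le_mul_left h6 h7
end Part3

section Part4

def zeta : ℂ := Complex.exp (2 * Real.pi * Complex.I / 3)

lemma zeta_pow_three : zeta ^ 3 = 1 := by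
  rw [zeta, ← Complex.exp_nat_mul]
  rw [show (3:ℕ) * (2 * Real.pi * Complex.I / 3) = 2 * Real.pi * Complex.I by push_cast; ring]
  exact Complex.exp_two_pi_mul_I

lemma zeta_ne_one : zeta ≠ 1 := by
  intro h
  rw [zeta, Complex.exp_eq_one_iff] at h
  obtain ⟨n, hn⟩ := h
  have hpi : (Real.pi : ℂ) ≠ 0 := by simpa using Real.pi_ne_zero
  have h2 : (2:ℂ) * Real.pi * Complex.I ≠ 0 := by
    simp [hpi, Complex.I_ne_zero]
  have h3 : (2 * (Real.pi:ℂ) * Complex.I) * (1/3 : ℂ)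
      = (2 * (Real.pi:ℂ) * Complex.I) * n := by
    linear_combination hn
  have h4 : (1/3 : ℂ) = n := mul_left_cancel₀ h2 h3
  have h5 : (3 : ℂ) * n = 1 := by linear_combination (-3 : ℂ) * h4
  have h6 : (3 : ℤ) * n = 1 := by exact_mod_cast h5
  omega

lemma zeta_sum : 1 + zeta + zeta ^ 2 = 0 := by
  have h : (zeta - 1) * (zeta ^ 2 + zeta + 1) = 0 := by
    have := zeta_pow_three
    linear_combination this - 1
  rcases mul_eq_zero.mp h with h1 | h2
  · exact absurd (sub_eq_zero.mp h1) zeta_ne_one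
  · linear_combination h2

def chi (t : ZMod 3) : ℂ := zeta ^ t.val

lemma chi_zero : chi 0 = 1 := by simp [chi]

lemma zeta_pow_mod (x : ℕ) : zeta ^ (x % 3) = zeta ^ x := by
  conv_rhs => rw [show x = 3 * (x / 3) + x % 3 from (Nat.div_add_mod x 3).symm]
  rw [pow_add, pow_mul, zeta_pow_three, one_pow, one_mul]

lemma chi_add (a b : ZMod 3) : chi (a + b) = chi a * chi b := by
  rw [chi, chi, chi, ZMod.val_add, zeta_pow_mod, pow_add]

lemma chi_ne_zero (t : ZMod 3) : chi t ≠ 0 := by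
  rw [chi]
  apply pow_ne_zero
  rw [zeta]
  exact Complex.exp_ne_zero _

lemma chi_neg (t : ZMod 3) : chi (-t) = (chi t)⁻¹ := by
  have h : chi (-t) * chi t = 1 := by rw [← chi_add, neg_add_cancel, chi_zero]
  exact eq_inv_of_mul_eq_one_left h

lemma star_zeta : star zeta = zeta⁻¹ := by
  rw [zeta, ← Complex.exp_neg]
  rw [show star (Complex.exp (2 * (Real.pi:ℂ) * Complex.I / 3))
      = (starRingEnd ℂ) (Complex.exp (2 * (Real.pi:ℂ) * Complex.I / 3)) from rfl,
    ← Complex.exp_conj]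
  congr 1
  simp [map_div₀, Complex.conj_I, map_ofNat]
  ring

lemma chi_star (t : ZMod 3) : star (chi t) = chi (-t) := by
  rw [chi_neg]
  simp only [chi]
  rw [star_pow, star_zeta, inv_pow]

lemma chi_sum_eq_prod {ι : Type*} (s : Finset ι) (f : ι → ZMod 3) :
    chi (∑ i ∈ s, f i) = ∏ i ∈ s, chi (f i) := by
  classical
  induction s using Finset.induction_on with
  | empty => simp [chi_zero]
  | insert _ _ hni ih =>
    rw [Finset.sum_insert hni, Finset.prod_insert hni, chi_add, ih]

lemma sum_chi_mul (c : ZMod 3) :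
    ∑ t : ZMod 3, chi (c * t) = if c = 0 then 3 else 0 := by
  have huniv : (Finset.univ : Finset (ZMod 3)) = {0, 1, 2} := by decide
  rw [huniv]
  rw [Finset.sum_insert (by decide), Finset.sum_insert (by decide), Finset.sum_singleton]
  rcases (show ∀ x : ZMod 3, x = 0 ∨ x = 1 ∨ x = 2 from by decide) c with rfl | rfl | rfl
  · rw [if_pos rfl]
    norm_num [chi_zero]
  · rw [if_neg (by decide)]
    rw [show (1:ZMod 3) * 0 = 0 from by decide, show (1:ZMod 3) * 1 = 1 from by decide,
      show (1:ZMod 3) * 2 = 2 from by decide, chi_zero]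
    rw [show chi 1 = zeta from by
      simp only [chi]; rw [show ZMod.val (1 : ZMod 3) = 1 from by decide, pow_one],
      show chi 2 = zeta ^ 2 from by
      simp only [chi]; rw [show ZMod.val (2 : ZMod 3) = 2 from by decide]]
    linear_combination zeta_sum
  · rw [if_neg (by decide)]
    rw [show (2:ZMod 3) * 0 = 0 from by decide, show (2:ZMod 3) * 1 = 2 from by decide,
      show (2:ZMod 3) * 2 = 1 from by decide, chi_zero]
    rw [show chi 1 = zeta from by
      simp only [chi]; rw [show ZMod.val (1 : ZMod 3) = 1 from by decide, pow_one],
      show chi 2 = zeta ^ 2 from by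
      simp only [chi]; rw [show ZMod.val (2 : ZMod 3) = 2 from by decide]]
    linear_combination zeta_sum

def cvec {d : ℕ} (j k j' k' : Fin d) : Fin d → ZMod 3 := fun i =>
  (if j = i then 1 else 0) - (if k = i then 1 else 0) - (if j' = i then 1 else 0)
    + (if k' = i then 1 else 0)

lemma cvec_zero_iff {d : ℕ} (j k j' k' : Fin d) :
    (∀ i, cvec j k j' k' i = 0) ↔ ((j = k ∧ j' = k') ∨ (j = j' ∧ k = k')) := by
  constructor
  · intro h
    by_cases hjk : j = k
    · subst hjk
      by_cases hj'k' : j' = k'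
      · exact Or.inl ⟨rfl, hj'k'⟩
      · exfalso
        have hh := h j'
        simp only [cvec] at hh
        by_cases h1 : j = j' <;> by_cases h2 : k' = j' <;>
          simp only [h1, h2, if_pos, if_neg, if_true, if_false] at hh <;>
          first
            | exact hj'k' (h2.symm ▸ rfl)
            | revert hh
              decide
    · by_cases hj' : j' = j
      · by_cases hk' : k' = j
        · exfalso
          have hh := h j
          simp only [cvec, if_pos rfl, if_neg (fun hc => hjk (hc ▸ rfl) : ¬ k = j),
            if_pos hj', if_pos hk'] at hh
          revert hh
          decide
        · by_cases hkk : k' = k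
          · exact Or.inr ⟨hj'.symm, hkk.symm⟩
          · exfalso
            have hh := h k
            have hjk' : ¬ j = k := hjk
            have hj'k : ¬ j' = k := fun hc => hjk (hj' ▸ hc ▸ rfl)
            simp only [cvec, if_neg hjk', if_pos rfl, if_neg hj'k, if_neg hkk] at hh
            revert hh
            decide
      · by_cases hk' : k' = j
        · exfalso
          have hh := h j
          simp only [cvec, if_pos rfl, if_neg (fun hc => hjk (hc ▸ rfl) : ¬ k = j),
            if_neg hj', if_pos hk'] at hh
          revert hh
          decide
        · exfalso
          have hh := h j
          simp only [cvec, if_pos rfl, if_neg (fun hc => hjk (hc ▸ rfl) : ¬ k = j),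
            if_neg hj', if_neg hk'] at hh
          revert hh
          decide
  · rintro (⟨rfl, rfl⟩ | ⟨rfl, rfl⟩) <;> intro i <;> simp only [cvec] <;> ring

lemma char_sum {d : ℕ} (j k j' k' : Fin d) :
    ∑ v : Fin d → ZMod 3, chi (v j - v k - v j' + v k')
      = if (j = k ∧ j' = k') ∨ (j = j' ∧ k = k') then (3:ℂ) ^ d else 0 := by
  have hrw : ∀ v : Fin d → ZMod 3, v j - v k - v j' + v k' = ∑ i, cvec j k j' k' i * v i := by
    intro v
    simp only [cvec, sub_mul, add_mul, ite_mul, one_mul, zero_mul]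
    rw [Finset.sum_add_distrib, Finset.sum_sub_distrib, Finset.sum_sub_distrib]
    simp [Finset.sum_ite_eq]
  have step1 : ∑ v : Fin d → ZMod 3, chi (v j - v k - v j' + v k')
      = ∑ v : Fin d → ZMod 3, ∏ i, chi (cvec j k j' k' i * v i) := by
    refine Finset.sum_congr rfl fun v _ => ?_
    rw [hrw v, chi_sum_eq_prod]
  have step2 : ∑ v : Fin d → ZMod 3, ∏ i, chi (cvec j k j' k' i * v i)
      = ∏ i, ∑ t : ZMod 3, chi (cvec j k j' k' i * t) := by
    rw [Finset.prod_univ_sum]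
    rw [Fintype.piFinset_univ]
  rw [step1, step2]
  simp only [sum_chi_mul]
  by_cases hall : ∀ i, cvec j k j' k' i = 0
  · rw [if_pos ((cvec_zero_iff j k j' k').mp hall)]
    rw [Finset.prod_congr rfl fun i _ => if_pos (hall i)]
    simp
  · rw [if_neg (fun hor => hall ((cvec_zero_iff j k j' k').mpr hor))]
    obtain ⟨i0, hi0⟩ := not_forall.mp hall
    exact Finset.prod_eq_zero (Finset.mem_univ i0) (if_neg hi0)

end Part4
section Part5
open Matrix BigOperators Kronecker
open scoped ComplexOrder

def Av {d : ℕ} (v : Fin d → ZMod 3) : Matrix (Fin d) (Fin d) ℂ :=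
  Matrix.of fun j k => chi (v j - v k) / (d : ℂ)

lemma Av_state {d : ℕ} (hd : 0 < d) (v : Fin d → ZMod 3) : IsState (Av v) := by
  have hsplit : ∀ j k : Fin d, Av v j k = chi (v j) * chi (- v k) * ((d:ℂ))⁻¹ := by
    intro j k
    rw [← chi_add, ← sub_eq_add_neg]
    simp [Av, div_eq_mul_inv]
  constructor
  · refine Matrix.PosSemidef.of_dotProduct_mulVec_nonneg ?_ ?_
    · ext j k
      rw [Matrix.conjTranspose_apply, hsplit, hsplit]
      rw [star_mul', star_mul', chi_star, chi_star, neg_neg]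
      rw [show star ((d:ℂ))⁻¹ = ((d:ℂ))⁻¹ from by
        rw [star_inv₀, star_natCast]]
      ring
    · intro x
      set S : ℂ := ∑ k, chi (- v k) * x k with hS
      have hform : dotProduct (star x) ((Av v) *ᵥ x) = star S * S * ((d:ℂ))⁻¹ := by
        rw [dotProduct, hS]
        have hstarS : star (∑ k, chi (- v k) * x k) = ∑ j, star (x j) * chi (v j) := by
          rw [star_sum]
          refine Finset.sum_congr rfl fun j _ => ?_
          rw [star_mul', chi_star, neg_neg]
          ring
        rw [hstarS, Finset.sum_mul_sum, Finset.sum_mul]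
        refine Finset.sum_congr rfl fun j _ => ?_
        rw [Matrix.mulVec, dotProduct, Finset.mul_sum, Finset.sum_mul]
        refine Finset.sum_congr rfl fun k _ => ?_
        rw [hsplit]
        simp only [Pi.star_apply]
        ring
      rw [hform]
      have : star S * S * ((d:ℂ))⁻¹ = ((Complex.normSq S * (d:ℝ)⁻¹ : ℝ) : ℂ) := by
        rw [show star S = (starRingEnd ℂ) S from rfl, Complex.ofReal_mul,
          ← Complex.normSq_eq_conj_mul_self]
        push_cast
        ring
      rw [this]
      rw [Complex.zero_le_real]
      exact mul_nonneg (Complex.normSq_nonneg S) (by positivity)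
  · rw [Matrix.trace]
    simp only [Matrix.diag_apply, Av, Matrix.of_apply, sub_self, chi_zero]
    rw [Finset.sum_const, Finset.card_univ, Fintype.card_fin]
    have : (d:ℂ) ≠ 0 := by exact_mod_cast hd.ne'
    rw [nsmul_eq_mul]
    field_simp
lemma D_state {d : ℕ} (j : Fin d) : IsState (Matrix.single j j (1:ℂ)) := by
  constructor
  · have hdiag : Matrix.single j j (1:ℂ)
        = Matrix.diagonal (fun i => if j = i then 1 else 0) := by
      ext a b
      simp only [Matrix.single, Matrix.of_apply, Matrix.diagonal_apply]
      by_cases h1 : j = a <;> by_cases h2 : j = b <;> by_cases h3 : a = b <;> simp_all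
    rw [hdiag]
    refine Matrix.PosSemidef.diagonal ?_
    intro i
    dsimp
    split_ifs
    · exact zero_le_one
    · exact le_refl 0
  · rw [Matrix.trace]
    simp only [Matrix.diag_apply, Matrix.single, Matrix.of_apply, and_self]
    rw [Finset.sum_ite_eq Finset.univ j (fun _ => (1:ℂ))]
    simp

lemma Avsum_entry {d : ℕ} (j j' k k' : Fin d) :
    (∑ v : Fin d → ZMod 3, (Av v ⊗ₖ Av (-v))) (j, j') (k, k')
      = (if (j = k ∧ j' = k') ∨ (j = j' ∧ k = k') then (3:ℂ) ^ d else 0) / (d:ℂ)^2 := by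
  rw [Matrix.sum_apply]
  have hterm : ∀ v : Fin d → ZMod 3, (Av v ⊗ₖ Av (-v)) (j, j') (k, k')
      = chi (v j - v k - v j' + v k') * ((d:ℂ)^2)⁻¹ := by
    intro v
    rw [Matrix.kroneckerMap_apply]
    simp only [Av, Matrix.of_apply, Pi.neg_apply]
    rw [div_mul_div_comm, ← chi_add]
    rw [show v j - v k + (-v j' - -v k') = v j - v k - v j' + v k' from by ring]
    rw [div_eq_mul_inv]
    ring_nf
  simp only [hterm]
  rw [← Finset.sum_mul, char_sum j k j' k', div_eq_mul_inv]

lemma Dsum_entry {d : ℕ} (u : ℂ) (j j' k k' : Fin d) :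
    (∑ l : Fin d, u • (Matrix.single l l (1:ℂ) ⊗ₖ Matrix.single l l (1:ℂ)))
        (j, j') (k, k')
      = if j = k ∧ j' = k' ∧ j = j' then u else 0 := by
  rw [Matrix.sum_apply]
  have hterm : ∀ l : Fin d,
      (u • (Matrix.single l l (1:ℂ) ⊗ₖ Matrix.single l l (1:ℂ))) (j, j') (k, k')
      = if l = j then (if j = k ∧ j' = k' ∧ j = j' then u else 0) else 0 := by
    intro l
    rw [Matrix.smul_apply, Matrix.kroneckerMap_apply]
    simp only [Matrix.single, Matrix.of_apply]
    by_cases h1 : l = j <;> by_cases h2 : l = k <;> by_cases h3 : l = j' <;>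
      by_cases h4 : l = k' <;> simp_all <;> try ring
    all_goals (split_ifs <;> simp_all <;> try ring)
  simp only [hterm]
  rw [Finset.sum_ite_eq' Finset.univ j]
  simp

lemma iso_decomp {d : ℕ} (hd : 2 ≤ d) :
    isotropic d (1/((d:ℝ)+1))
      = (((d / (((d:ℝ)+1) * 3^d) : ℝ) : ℂ) • ∑ v : Fin d → ZMod 3, (Av v ⊗ₖ Av (-v)))
        + ∑ l : Fin d, ((1/((d:ℝ)*((d:ℝ)+1)) : ℝ) : ℂ) •
            (Matrix.single l l (1:ℂ) ⊗ₖ Matrix.single l l (1:ℂ)) := by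
  have hd0 : 0 < d := by omega
  have hdR : (0:ℝ) < d := by exact_mod_cast hd0
  have hdC : (d:ℂ) ≠ 0 := by exact_mod_cast hd0.ne'
  have h3C : ((3:ℂ))^d ≠ 0 := pow_ne_zero _ (by norm_num)
  have h3R : ((3:ℝ))^d ≠ 0 := pow_ne_zero _ (by norm_num)
  have hd1R : ((d:ℝ)+1) ≠ 0 := by positivity
  have hcast : ((d:ℂ)+1) = ((((d:ℝ)+1) : ℝ) : ℂ) := by push_cast; ring
  have hd1C : ((d:ℂ)+1) ≠ 0 := by
    rw [hcast]
    exact Complex.ofReal_ne_zero.mpr hd1R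
  ext ⟨j, j'⟩ ⟨k, k'⟩
  rw [isotropic]
  rw [Matrix.add_apply, Matrix.add_apply, Matrix.smul_apply, Matrix.smul_apply,
    Matrix.smul_apply, Matrix.smul_apply, Matrix.one_apply, Avsum_entry, Dsum_entry]
  simp only [maxEnt, Matrix.of_apply, smul_eq_mul]
  by_cases hP : j = k ∧ j' = k' <;> by_cases hQ : j = j' ∧ k = k'
  · rw [if_pos hQ, if_pos (show (j,j') = (k,k') from by rw [hP.1, hP.2]),
      if_pos (Or.inl hP), if_pos ⟨hP.1, hP.2, hQ.1⟩]
    push_cast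
    field_simp
    ring
  · rw [if_neg hQ, if_pos (show (j,j') = (k,k') from by rw [hP.1, hP.2]),
      if_pos (Or.inl hP),
      if_neg (show ¬(j = k ∧ j' = k' ∧ j = j') from by
        rintro ⟨h1, h2, h3⟩
        exact hQ ⟨h3, by rw [← h1, ← h2]; exact h3⟩)]
    push_cast
    field_simp
    ring
  · rw [if_pos hQ,
      if_neg (show ¬(j,j') = (k,k') from by
        intro h
        rw [Prod.mk.injEq] at h
        exact hP ⟨h.1, h.2⟩),
      if_pos (Or.inr hQ),
      if_neg (show ¬(j = k ∧ j' = k' ∧ j = j') from by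
        rintro ⟨h1, h2, h3⟩
        exact hP ⟨h1, h2⟩)]
    push_cast
    field_simp
    ring
  · rw [if_neg hQ,
      if_neg (show ¬(j,j') = (k,k') from by
        intro h
        rw [Prod.mk.injEq] at h
        exact hP ⟨h.1, h.2⟩),
      if_neg (show ¬((j = k ∧ j' = k') ∨ (j = j' ∧ k = k')) from by
        rintro (h | h)
        exacts [hP h, hQ h]),
      if_neg (show ¬(j = k ∧ j' = k' ∧ j = j') from by
        rintro ⟨h1, h2, h3⟩
        exact hP ⟨h1, h2⟩)]
    simp

lemma isSep_reindex {n : ℕ} {ι : Type*} [Fintype ι]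
    (ρ : Matrix (Fin n × Fin n) (Fin n × Fin n) ℂ)
    (q : ι → ℝ) (A B : ι → Matrix (Fin n) (Fin n) ℂ)
    (hq0 : ∀ i, 0 ≤ q i) (hq1 : ∑ i, q i = 1)
    (hA : ∀ i, IsState (A i)) (hB : ∀ i, IsState (B i))
    (hρ : ρ = ∑ i, (q i : ℂ) • (A i ⊗ₖ B i)) : IsSepState ρ := by
  classical
  set e := (Fintype.equivFin ι).symm
  refine ⟨Fintype.card ι, q ∘ e, A ∘ e, B ∘ e, fun i => hq0 (e i), ?_,
    fun i => hA (e i), fun i => hB (e i), ?_⟩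
  · rw [show (∑ i, (q ∘ e) i) = ∑ i, q i from Equiv.sum_comp e q]
    exact hq1
  · rw [hρ, ← Equiv.sum_comp e (fun i => (q i : ℂ) • (A i ⊗ₖ B i))]
    rfl

lemma maxEnt_state {d : ℕ} (hd : 0 < d) : IsState (maxEnt d) := by
  have hdC : (d:ℂ) ≠ 0 := by exact_mod_cast hd.ne'
  exact ⟨psd_of_proj' maxEnt_herm (maxEnt_idem hdC), maxEnt_trace hdC⟩

lemma iso_state {d : ℕ} (hd : 0 < d) (p : ℝ) (hp0 : 0 ≤ p) (hp1 : p ≤ 1) :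
    IsState (isotropic d p) := by
  have hdC : (d:ℂ) ≠ 0 := by exact_mod_cast hd.ne'
  have hdR : (0:ℝ) < d := by exact_mod_cast hd
  constructor
  · have hrw : isotropic d p
        = (p : ℂ) • maxEnt d + ((((1-p)/(d:ℝ)^2 : ℝ)) : ℂ) • (1 : Matrix _ _ ℂ) := by
      rw [isotropic, smul_smul]
      congr 2
      push_cast
      ring
    rw [hrw]
    exact ((psd_smul (psd_of_proj' maxEnt_herm (maxEnt_idem hdC)) hp0)).add
      (psd_smul Matrix.PosSemidef.one (div_nonneg (by linarith) (by positivity)))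
  · rw [isotropic, Matrix.trace_add, Matrix.trace_smul, Matrix.trace_smul,
      Matrix.trace_smul, maxEnt_trace hdC, Matrix.trace_one]
    simp only [smul_eq_mul, mul_one]
    rw [show (Fintype.card (Fin d × Fin d) : ℂ) = (d:ℂ)^2 from by
      simp [Fintype.card_prod]; ring]
    field_simp
    push_cast
    ring

lemma iso_boundary_sep {d : ℕ} (hd : 2 ≤ d) : IsSepState (isotropic d (1/((d:ℝ)+1))) := by
  have hd0 : 0 < d := by omega
  have hdR : (0:ℝ) < d := by exact_mod_cast hd0
  apply isSep_reindex (ι := (Fin d → ZMod 3) ⊕ Fin d)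
    (q := Sum.elim (fun _ => (d / (((d:ℝ)+1) * 3^d))) (fun _ => 1/((d:ℝ)*((d:ℝ)+1))))
    (A := Sum.elim (fun v => Av v) (fun l => Matrix.single l l 1))
    (B := Sum.elim (fun v => Av (-v)) (fun l => Matrix.single l l 1))
  · rintro (v | l) <;> simp only [Sum.elim_inl, Sum.elim_inr] <;> positivity
  · rw [Fintype.sum_sum_type]
    simp only [Sum.elim_inl, Sum.elim_inr]
    rw [Finset.sum_const, Finset.sum_const, Finset.card_univ, Finset.card_univ]
    rw [Fintype.card_fin]
    rw [show (Fintype.card (Fin d → ZMod 3)) = 3^d from by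
      rw [Fintype.card_fun]
      simp]
    simp only [nsmul_eq_mul]
    have h3R : (0:ℝ) < 3^d := by positivity
    field_simp
    push_cast
    ring
  · rintro (v | l)
    · exact Av_state hd0 v
    · exact D_state l
  · rintro (v | l)
    · exact Av_state hd0 (-v)
    · exact D_state l
  · rw [iso_decomp hd, Fintype.sum_sum_type]
    simp only [Sum.elim_inl, Sum.elim_inr]
    rw [Finset.smul_sum]

end Part5
section Part6
open Matrix BigOperators Kronecker
open scoped ComplexOrder

theorem stmt_16 (d : ℕ) (hd : 2 ≤ d) (p : ℝ)
    (hp₁ : 1 / ((d : ℝ) + 1) ≤ p) (hp₂ : p ≤ 1) :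
    BSA (isotropic d p) = ((d : ℝ) + 1) / (d : ℝ) * (1 - p) := by
  have hd0 : 0 < d := by omega
  have hdR : (0:ℝ) < d := by exact_mod_cast hd0
  have hd1R : (0:ℝ) < (d:ℝ) + 1 := by positivity
  set lam : ℝ := ((d : ℝ) + 1) / (d : ℝ) * (1 - p) with hlam
  have hp1d : 1 ≤ p * ((d:ℝ)+1) := by
    rw [div_le_iff₀ hd1R] at hp₁
    linarith
  have hlam0 : 0 ≤ lam := by
    apply mul_nonneg (by positivity)
    linarith
  have hlam1 : lam ≤ 1 := by
    rw [hlam, div_mul_eq_mul_div, div_le_one hdR]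
    nlinarith
  have hident : isotropic d p
      = (lam : ℂ) • isotropic d (1/((d:ℝ)+1)) + ((1 - lam : ℝ) : ℂ) • maxEnt d := by
    rw [isotropic, isotropic]
    match_scalars
    · push_cast
      rw [hlam]
      push_cast
      field_simp
      ring
    · push_cast
      rw [hlam]
      push_cast
      field_simp
      ring
  have hmem : lam ∈ {l : ℝ | l ∈ Set.Icc (0 : ℝ) 1 ∧ ∃ σ τ, IsState σ ∧ IsSepState σ ∧
      IsState τ ∧ isotropic d p = (l : ℂ) • σ + ((1 - l : ℝ) : ℂ) • τ} :=
    ⟨⟨hlam0, hlam1⟩, isotropic d (1/((d:ℝ)+1)), maxEnt d,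
      iso_state hd0 _ (by positivity) (by rw [div_le_one hd1R]; linarith),
      iso_boundary_sep hd, maxEnt_state hd0, hident⟩
  have hub : ∀ l ∈ {l : ℝ | l ∈ Set.Icc (0 : ℝ) 1 ∧ ∃ σ τ, IsState σ ∧ IsSepState σ ∧
      IsState τ ∧ isotropic d p = (l : ℂ) • σ + ((1 - l : ℝ) : ℂ) • τ}, l ≤ lam := by
    rintro l ⟨⟨hl0, hl1⟩, σ, τ, hσ, hσs, hτ, hdec⟩
    exact upper_bound d hd p l hl0 hl1 σ τ hσs hτ hdec
  exact IsGreatest.csSup_eq ⟨hmem, hub⟩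

end Part6


end
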